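/- Let n ≥ 1, let 0 < p < 1, and let (a_k)_{k=1}^n and (b_k)_{k=1}^n be non-negative non-increasing sequences of real numbers. Then ∑_{k=1}^n (-1)^{k+1} (a_k + b_k)^p ≤ ∑_{k=1}^n (-1)^{k+1} (a_k^p + b_k^p). -/

import Mathlib

/-- Subadditivity of `rpow` for exponents in `[0,1]` on the reals. -/
lemma rpow_subadd {p : ℝ} (hp0 : 0 ≤ p) (hp1 : p ≤ 1) {x y : ℝ} (hx : 0 ≤ x) (hy : 0 ≤ y) :
    (x + y) ^ p ≤ x ^ p + y ^ p := by
  have h := NNReal.rpow_add_le_add_rpow (⟨x, hx⟩ : NNReal) (⟨y, hy⟩ : NNReal) hp0 hp1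
  have := (NNReal.coe_le_coe).2 h
  exact this

/-- Increment inequality for a concave power: `f(x+h) - f(y+h) ≤ f(x) - f(y)` for `y ≤ x`. -/
lemma rpow_increment {p : ℝ} (hp0 : 0 < p) (hp1 : p < 1) {x y h : ℝ}
    (hy : 0 ≤ y) (hyx : y ≤ x) (hh : 0 ≤ h) :
    (x + h) ^ p + y ^ p ≤ x ^ p + (y + h) ^ p := by
  have hconc := Real.concaveOn_rpow hp0.le hp1.le
  rcases eq_or_lt_of_le (show y ≤ x + h by linarith) with heq | hlt
  · have hx : x = y := by linarith
    have hh0 : h = 0 := by linarith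
    simp [hx, hh0]
  · set D : ℝ := x + h - y with hD
    have hDpos : 0 < D := by linarith
    set t : ℝ := h / D with ht
    set s : ℝ := (x - y) / D with hs
    have htnn : 0 ≤ t := div_nonneg hh hDpos.le
    have hsnn : 0 ≤ s := div_nonneg (by linarith) hDpos.le
    have hts : t + s = 1 := by rw [ht, hs, ← add_div, div_eq_one_iff_eq hDpos.ne', hD]; ring
    have hst : s + t = 1 := by linarith
    have hymem : y ∈ Set.Ici (0 : ℝ) := hy
    have hxhmem : x + h ∈ Set.Ici (0 : ℝ) := by simp; linarith
    have e1 : t • y + s • (x + h) = x := by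
      simp only [smul_eq_mul, ht, hs]
      field_simp
      ring
    have e2 : s • y + t • (x + h) = y + h := by
      simp only [smul_eq_mul, ht, hs]
      field_simp
      ring
    have f1 := hconc.2 hymem hxhmem htnn hsnn hts
    have f2 := hconc.2 hymem hxhmem hsnn htnn hst
    rw [e1] at f1
    rw [e2] at f2
    simp only [smul_eq_mul] at f1 f2
    have e : t * y ^ p + s * (x + h) ^ p + (s * y ^ p + t * (x + h) ^ p)
        = y ^ p + (x + h) ^ p := by
      linear_combination (y ^ p + (x + h) ^ p) * hts
    linarith [f1, f2, e]

/-- An alternating sum of a non-negative non-increasing sequence is non-negative. -/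
lemma alt_sum_nonneg : ∀ n : ℕ, ∀ c : ℕ → ℝ,
    (∀ k, 1 ≤ k → k ≤ n → 0 ≤ c k) → (∀ k, 1 ≤ k → k < n → c (k + 1) ≤ c k) →
    0 ≤ ∑ k ∈ Finset.Icc 1 n, (-1 : ℝ) ^ (k + 1) * c k := by
  intro n
  induction n using Nat.strong_induction_on with
  | _ n ih =>
    match n with
    | 0 => intro c _ _; simp
    | 1 =>
      intro c hnn _
      have := hnn 1 le_rfl le_rfl
      simpa using this
    | (m + 2) =>
      intro c hnn hmono
      have hsplit : Finset.Icc 1 (m + 2) = insert 1 (insert 2 (Finset.Icc 3 (m + 2))) := by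
        ext x
        simp only [Finset.mem_Icc, Finset.mem_insert]
        omega
      have h1 : (1 : ℕ) ∉ insert 2 (Finset.Icc 3 (m + 2)) := by
        simp only [Finset.mem_insert, Finset.mem_Icc]; omega
      have h2 : (2 : ℕ) ∉ Finset.Icc 3 (m + 2) := by
        simp only [Finset.mem_Icc]; omega
      rw [hsplit, Finset.sum_insert h1, Finset.sum_insert h2]
      have htail : ∑ k ∈ Finset.Icc 3 (m + 2), (-1 : ℝ) ^ (k + 1) * c k
          = ∑ k ∈ Finset.Icc 1 m, (-1 : ℝ) ^ (k + 1) * c (k + 2) := by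
        have : Finset.Icc 3 (m + 2) =
            Finset.map (addRightEmbedding 2) (Finset.Icc 1 m) := by
          rw [Finset.map_add_right_Icc]
        rw [this, Finset.sum_map]
        refine Finset.sum_congr rfl fun k _ => ?_
        simp only [addRightEmbedding_apply]
        ring_nf
      have htail_nonneg : 0 ≤ ∑ k ∈ Finset.Icc 1 m, (-1 : ℝ) ^ (k + 1) * c (k + 2) := by
        refine ih m (by omega) (fun k => c (k + 2)) ?_ ?_
        · intro k hk1 hkm; exact hnn (k + 2) (by omega) (by omega)
        · intro k hk1 hkm; exact hmono (k + 2) (by omega) (by omega)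
      have h12 : c 2 ≤ c 1 := hmono 1 le_rfl (by omega)
      rw [htail]
      have : (-1 : ℝ) ^ (1 + 1) * c 1 + (-1 : ℝ) ^ (2 + 1) * c 2 = c 1 - c 2 := by ring
      linarith [htail_nonneg, this.ge]

/-- The reverse of inequality (ineq22) of the paper for `0 < p < 1`: alternating
subadditivity of `t ↦ t^p` for non-negative non-increasing sequences. -/
theorem alternating_subadditive (n : ℕ) (hn : 1 ≤ n) (p : ℝ) (hp0 : 0 < p) (hp1 : p < 1)
    (a b : ℕ → ℝ)
    (ha_nonneg : ∀ k, 1 ≤ k → k ≤ n → 0 ≤ a k)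
    (hb_nonneg : ∀ k, 1 ≤ k → k ≤ n → 0 ≤ b k)
    (ha_mono : ∀ k, 1 ≤ k → k < n → a (k + 1) ≤ a k)
    (hb_mono : ∀ k, 1 ≤ k → k < n → b (k + 1) ≤ b k) :
    ∑ k ∈ Finset.Icc 1 n, (-1 : ℝ) ^ (k + 1) * (a k + b k) ^ p ≤
      ∑ k ∈ Finset.Icc 1 n, (-1 : ℝ) ^ (k + 1) * (a k ^ p + b k ^ p) := by
  rw [← sub_nonneg, ← Finset.sum_sub_distrib]
  have hrw : ∀ k ∈ Finset.Icc 1 n,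
      (-1 : ℝ) ^ (k + 1) * (a k ^ p + b k ^ p) - (-1 : ℝ) ^ (k + 1) * (a k + b k) ^ p
        = (-1 : ℝ) ^ (k + 1) * (a k ^ p + b k ^ p - (a k + b k) ^ p) := fun k _ => by ring
  rw [Finset.sum_congr rfl hrw]
  refine alt_sum_nonneg n (fun k => a k ^ p + b k ^ p - (a k + b k) ^ p) ?_ ?_
  · intro k hk1 hkn
    have := rpow_subadd hp0.le hp1.le (ha_nonneg k hk1 hkn) (hb_nonneg k hk1 hkn)
    linarith
  · intro k hk1 hkn
    have hk1n : k ≤ n := hkn.le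
    have hk2n : k + 1 ≤ n := hkn
    have ha1 := ha_nonneg k hk1 hk1n
    have ha2 := ha_nonneg (k + 1) (by omega) hk2n
    have hb1 := hb_nonneg k hk1 hk1n
    have hb2 := hb_nonneg (k + 1) (by omega) hk2n
    have hma := ha_mono k hk1 hkn
    have hmb := hb_mono k hk1 hkn
    have t1 := rpow_increment hp0 hp1 ha2 hma hb2
    have t2 := rpow_increment hp0 hp1 hb2 hmb ha1
    rw [show b k + a k = a k + b k by ring, show b (k + 1) + a k = a k + b (k + 1) by ring]
      at t2
    linarith [t1, t2]
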